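/- arXiv:hep-th/0401053 — 4 statements merged into one kernel-verified Lean document; each statement's English description precedes it below -/
import Mathlib

section
/- If n = (n_1,...,n_{10}) ∈ Z^{10} satisfies Σ n_i ≡ 0 mod 3, all n_i ≠ 0, and at least one n_i > 0 and at least one n_j < 0, and n is not a permutation of (1,-1,0,...,0)-type (i.e. genuinely all entries nonzero), then q(n) = Σ n_i² − (1/9)(Σ n_i)² > 2. -/
/-- The `E₁₀` quadratic form in the physical basis. -/
def qE10 (n : Fin 10 → ℤ) : ℚ :=
  (∑ i, ((n i : ℚ)) ^ 2) - (1 / 9) * (∑ i, (n i : ℚ)) ^ 2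

/-- Key integer inequality. -/
theorem key_int (n : Fin 10 → ℤ)
    (hdvd : (3 : ℤ) ∣ ∑ i, n i)
    (hne : ∀ i, n i ≠ 0)
    (hpos : ∃ i, 0 < n i)
    (hneg : ∃ j, n j < 0) :
    (18 : ℤ) < 9 * (∑ i, (n i)^2) - (∑ i, n i)^2 := by
  classical
  set s : Finset (Fin 10) := Finset.univ.filter (fun i => 0 < n i) with hs
  set t : Finset (Fin 10) := Finset.univ.filter (fun i => n i < 0) with ht
  have hst : ∀ i, i ∈ s ↔ ¬ i ∈ t := by
    intro i
    simp only [hs, ht, Finset.mem_filter, Finset.mem_univ, true_and]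
    have := hne i; omega
  have hsum_split : ∀ (f : Fin 10 → ℤ),
      (∑ i, f i) = (∑ i ∈ s, f i) + (∑ i ∈ t, f i) := by
    intro f
    rw [← Finset.sum_filter_add_sum_filter_not Finset.univ (fun i => 0 < n i) f]
    congr 1
    apply Finset.sum_congr _ (fun _ _ => rfl)
    ext i
    simp only [ht, Finset.mem_filter, Finset.mem_univ, true_and]
    have := hne i; omega
  have hteq : t = Finset.univ.filter (fun i => ¬ 0 < n i) := by
    ext i
    simp only [ht, Finset.mem_filter, Finset.mem_univ, true_and]
    have := hne i; omega
  have hcard : s.card + t.card = 10 := by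
    rw [hteq]
    have := Finset.card_filter_add_card_filter_not (s := (Finset.univ : Finset (Fin 10))) (p := fun i => 0 < n i)
    simpa using this
  set P : ℤ := ∑ i ∈ s, n i with hP
  set Nn : ℤ := ∑ i ∈ t, (-n i) with hNn
  have hmem_s : ∀ i ∈ s, 0 < n i := by
    intro i hi; simpa [hs] using hi
  have hmem_t : ∀ i ∈ t, n i < 0 := by
    intro i hi; simpa [ht] using hi
  have hsum_t : (∑ i ∈ t, n i) = -Nn := by
    simp [hNn, Finset.sum_neg_distrib]
  have hS : (∑ i, n i) = P - Nn := by
    rw [hsum_split (fun i => n i), hsum_t]; ring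
  have hsne : s.Nonempty := by
    obtain ⟨i, hi⟩ := hpos
    exact ⟨i, by simp [hs, hi]⟩
  have htne : t.Nonempty := by
    obtain ⟨j, hj⟩ := hneg
    exact ⟨j, by simp [ht, hj]⟩
  have hscard : s.card ≤ 9 := by
    have := Finset.card_pos.mpr htne; omega
  have htcard : t.card ≤ 9 := by
    have := Finset.card_pos.mpr hsne; omega
  have hP1 : 1 ≤ P := by
    have h := Finset.sum_le_sum (s := s) (f := fun _ : Fin 10 => (1:ℤ)) (g := fun i => n i)
      (fun i hi => hmem_s i hi)
    simp only [Finset.sum_const, nsmul_eq_mul, mul_one] at h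
    have := Finset.card_pos.mpr hsne
    omega
  have hNn1 : 1 ≤ Nn := by
    have h := Finset.sum_le_sum (s := t) (f := fun _ : Fin 10 => (1:ℤ)) (g := fun i => -n i)
      (fun i hi => by have := hmem_t i hi; show (1:ℤ) ≤ -n i; omega)
    simp only [Finset.sum_const, nsmul_eq_mul, mul_one] at h
    have := Finset.card_pos.mpr htne
    omega
  have hAs : P ≤ ∑ i ∈ s, (n i)^2 := by
    apply Finset.sum_le_sum
    intro i hi
    have := hmem_s i hi; nlinarith
  have hAt : Nn ≤ ∑ i ∈ t, (n i)^2 := by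
    apply Finset.sum_le_sum
    intro i hi
    have := hmem_t i hi; nlinarith
  have hcau_s : P^2 ≤ 9 * ∑ i ∈ s, (n i)^2 := by
    calc P^2 ≤ s.card * ∑ i ∈ s, (n i)^2 := sq_sum_le_card_mul_sum_sq
    _ ≤ 9 * ∑ i ∈ s, (n i)^2 := by
        apply mul_le_mul_of_nonneg_right _ ?_
        · exact_mod_cast hscard
        · positivity
  have hcau_t : Nn^2 ≤ 9 * ∑ i ∈ t, (n i)^2 := by
    have h0 : Nn^2 = (∑ i ∈ t, n i)^2 := by rw [hsum_t]; ring
    rw [h0]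
    calc (∑ i ∈ t, n i)^2 ≤ t.card * ∑ i ∈ t, (n i)^2 := sq_sum_le_card_mul_sum_sq
    _ ≤ 9 * ∑ i ∈ t, (n i)^2 := by
        apply mul_le_mul_of_nonneg_right _ ?_
        · exact_mod_cast htcard
        · positivity
  have hten : (10:ℤ) ≤ ∑ i, (n i)^2 := by
    have h := Finset.sum_le_sum (s := (Finset.univ : Finset (Fin 10))) (f := fun _ : Fin 10 => (1:ℤ)) (g := fun i => (n i)^2)
      (fun i _ => by show (1:ℤ) ≤ n i ^ 2; have := hne i; rcases this.lt_or_gt with h|h <;> nlinarith)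
    simpa using h
  have hsq_split : (∑ i, (n i)^2) = (∑ i ∈ s, (n i)^2) + (∑ i ∈ t, (n i)^2) :=
    hsum_split (fun i => (n i)^2)
  rw [hS] at hdvd ⊢
  obtain ⟨k, hk⟩ := hdvd
  have hcases : P - Nn ≤ -9 ∨ (-6 ≤ P - Nn ∧ P - Nn ≤ 6) ∨ 9 ≤ P - Nn := by omega
  rcases hcases with h | h | h
  · -- S ≤ -9 : Nn ≥ P + 9
    rw [hsq_split]
    nlinarith [mul_nonneg (by linarith : (0:ℤ) ≤ P - 1) (by linarith : (0:ℤ) ≤ 2*Nn - P - 19)]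
  · nlinarith
  · rw [hsq_split]
    nlinarith [mul_nonneg (by linarith : (0:ℤ) ≤ Nn - 1) (by linarith : (0:ℤ) ≤ 2*P - Nn - 19)]

/-- If `n ∈ ℤ¹⁰` satisfies `Σ nᵢ ≡ 0 mod 3`, all `nᵢ ≠ 0`, and has at least one
positive and at least one negative entry, then `q(n) > 2`. -/
theorem qE10_gt_two_of_mixed_signs (n : Fin 10 → ℤ)
    (hdvd : (3 : ℤ) ∣ ∑ i, n i)
    (hne : ∀ i, n i ≠ 0)
    (hpos : ∃ i, 0 < n i)
    (hneg : ∃ j, n j < 0) :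
    qE10 n > 2 := by
  have key := key_int n hdvd hne hpos hneg
  have key' : (18 : ℚ) < 9 * (∑ i, ((n i : ℚ))^2) - (∑ i, (n i : ℚ))^2 := by
    have : ((18:ℤ):ℚ) < ((9 * (∑ i, (n i)^2) - (∑ i, n i)^2 : ℤ) : ℚ) := by exact_mod_cast key
    push_cast at this
    convert this using 2
  unfold qE10
  linarith
end

section
/- For s ≥ 2 and integers 2 ≤ n_{s+1} ≤ ... ≤ n_{10}, the E10 norm of the vector n = (1,...,1,n_{s+1},...,n_{10}) (with s leading 1's) satisfies q(n) = (1/9)Σ_{s+1≤i<j≤10}(n_i−n_j)² + ((s−1)/9)Σ_{i=s+1}^{10}(n_i − s/(s−1))² − s/(s−1). -/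
lemma pair_sum (t : Finset (Fin 10)) (f : Fin 10 → ℚ) :
    ∑ p ∈ (t ×ˢ t).filter (fun p => p.1 < p.2), (f p.1 - f p.2) ^ 2
      = t.card * ∑ i ∈ t, f i ^ 2 - (∑ i ∈ t, f i) ^ 2 := by
  classical
  have hfull : ∑ p ∈ t ×ˢ t, (f p.1 - f p.2) ^ 2
      = 2 * (t.card * ∑ i ∈ t, f i ^ 2 - (∑ i ∈ t, f i) ^ 2) := by
    rw [Finset.sum_product]
    have : ∀ i ∈ t, ∑ j ∈ t, (f i - f j) ^ 2
        = t.card * f i ^ 2 - 2 * f i * (∑ j ∈ t, f j) + ∑ j ∈ t, f j ^ 2 := by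
      intro i _
      have e1 : ∑ j ∈ t, (f i - f j) ^ 2
          = ∑ j ∈ t, (f i ^ 2 - 2 * f i * f j + f j ^ 2) :=
        Finset.sum_congr rfl (fun j _ => by ring)
      rw [e1, Finset.sum_add_distrib, Finset.sum_sub_distrib, Finset.sum_const,
        ← Finset.mul_sum]
      ring
    rw [Finset.sum_congr rfl this]
    have e2 : ∑ i ∈ t, ((t.card : ℚ) * f i ^ 2 - 2 * f i * (∑ j ∈ t, f j) + ∑ j ∈ t, f j ^ 2)
        = ∑ i ∈ t, ((t.card : ℚ) * f i ^ 2 - f i * (2 * ∑ j ∈ t, f j) + ∑ j ∈ t, f j ^ 2) :=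
      Finset.sum_congr rfl (fun i _ => by ring)
    rw [e2, Finset.sum_add_distrib, Finset.sum_sub_distrib, ← Finset.mul_sum,
      ← Finset.sum_mul, Finset.sum_const, nsmul_eq_mul]
    ring
  have hswap : ∑ p ∈ (t ×ˢ t).filter (fun p => p.2 < p.1), (f p.1 - f p.2) ^ 2
      = ∑ p ∈ (t ×ˢ t).filter (fun p => p.1 < p.2), (f p.1 - f p.2) ^ 2 := by
    apply Finset.sum_nbij' (fun p => p.swap) (fun p => p.swap)
    · intro p hp; simp only [Finset.mem_filter, Finset.mem_product] at hp ⊢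
      exact ⟨⟨hp.1.2, hp.1.1⟩, hp.2⟩
    · intro p hp; simp only [Finset.mem_filter, Finset.mem_product] at hp ⊢
      exact ⟨⟨hp.1.2, hp.1.1⟩, hp.2⟩
    · intro p _; rfl
    · intro p _; rfl
    · intro p _; simp [Prod.swap]; ring
  have hsplit := Finset.sum_filter_add_sum_filter_not (t ×ˢ t)
    (fun p => p.1 < p.2) (fun p => (f p.1 - f p.2) ^ 2)
  have heq : ∑ p ∈ (t ×ˢ t).filter (fun p => ¬ p.1 < p.2), (f p.1 - f p.2) ^ 2
      = ∑ p ∈ (t ×ˢ t).filter (fun p => p.2 < p.1), (f p.1 - f p.2) ^ 2 := by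
    rw [← Finset.sum_filter_add_sum_filter_not ((t ×ˢ t).filter (fun p => ¬ p.1 < p.2))
      (fun p => p.2 < p.1) (fun p => (f p.1 - f p.2) ^ 2)]
    have h1 : ((t ×ˢ t).filter (fun p => ¬ p.1 < p.2)).filter (fun p => p.2 < p.1)
        = (t ×ˢ t).filter (fun p => p.2 < p.1) := by
      rw [Finset.filter_filter]
      apply Finset.filter_congr
      intro p _
      constructor
      · exact fun h => h.2
      · exact fun h => ⟨not_lt_of_gt h, h⟩
    have h2 : ∑ p ∈ ((t ×ˢ t).filter (fun p => ¬ p.1 < p.2)).filter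
        (fun p => ¬ p.2 < p.1), (f p.1 - f p.2) ^ 2 = 0 := by
      apply Finset.sum_eq_zero
      intro p hp
      simp only [Finset.mem_filter] at hp
      have : p.1 = p.2 := le_antisymm (not_lt.mp hp.2) (not_lt.mp hp.1.2)
      rw [this]; ring
    rw [h1, h2, add_zero]
  rw [heq, hswap] at hsplit
  linarith

/-- For `s ≥ 2` and `2 ≤ n_{s+1} ≤ ⋯ ≤ n₁₀`, with `n₁ = ⋯ = n_s = 1`, one has
`q(n) = (1/9) Σ_{s+1≤i<j≤10}(nᵢ−nⱼ)² + ((s−1)/9) Σ_{i>s}(nᵢ − s/(s−1))² − s/(s−1)`. -/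
theorem qE10_singleton_identity (s : ℕ) (hs : 2 ≤ s) (hs10 : s ≤ 10)
    (n : Fin 10 → ℤ)
    (hone : ∀ i : Fin 10, i.val < s → n i = 1)
    (htwo : ∀ i : Fin 10, s ≤ i.val → 2 ≤ n i)
    (hmono : ∀ i j : Fin 10, s ≤ i.val → i ≤ j → n i ≤ n j) :
    qE10 n =
      (1 / 9) * (∑ p ∈ Finset.univ.filter
          (fun p : Fin 10 × Fin 10 => s ≤ p.1.val ∧ p.1 < p.2),
          ((n p.1 : ℚ) - (n p.2 : ℚ)) ^ 2)
      + (((s : ℚ) - 1) / 9) * (∑ i ∈ Finset.univ.filter (fun i : Fin 10 => s ≤ i.val),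
          ((n i : ℚ) - (s : ℚ) / ((s : ℚ) - 1)) ^ 2)
      - (s : ℚ) / ((s : ℚ) - 1) := by
  classical
  set T : Finset (Fin 10) := Finset.univ.filter (fun i : Fin 10 => s ≤ i.val) with hT
  set f : Fin 10 → ℚ := fun i => (n i : ℚ) with hf
  -- pair set equals product filter
  have hpairset : Finset.univ.filter
      (fun p : Fin 10 × Fin 10 => s ≤ p.1.val ∧ p.1 < p.2)
      = (T ×ˢ T).filter (fun p => p.1 < p.2) := by
    ext p
    simp only [Finset.mem_filter, Finset.mem_univ, true_and, Finset.mem_product, hT]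
    constructor
    · rintro ⟨h1, h2⟩
      exact ⟨⟨h1, le_of_lt (lt_of_le_of_lt h1 h2)⟩, h2⟩
    · rintro ⟨⟨h1, _⟩, h2⟩
      exact ⟨h1, h2⟩
  have hcard : (T.card : ℚ) = 10 - s := by
    have : T.card = 10 - s := by
      rw [hT]; interval_cases s <;> decide
    rw [this]
    have : (10 - s : ℕ) = 10 - s := rfl
    push_cast [Nat.cast_sub hs10]
    ring
  -- split full sums
  have hsum1 : ∑ i, f i = s + ∑ i ∈ T, f i := by
    rw [← Finset.sum_filter_add_sum_filter_not Finset.univ (fun i : Fin 10 => s ≤ i.val) f]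
    have h1 : ∑ i ∈ Finset.univ.filter (fun i : Fin 10 => ¬ s ≤ i.val), f i
        = (Finset.univ.filter (fun i : Fin 10 => ¬ s ≤ i.val)).card := by
      have e : ∑ i ∈ Finset.univ.filter (fun i : Fin 10 => ¬ s ≤ i.val), f i
          = ∑ _i ∈ Finset.univ.filter (fun i : Fin 10 => ¬ s ≤ i.val), (1 : ℚ) :=
        Finset.sum_congr rfl (fun i hi => by
          simp only [Finset.mem_filter, not_le] at hi
          simp [hf, hone i hi.2])
      rw [e]; simp
    have hc : ((Finset.univ.filter (fun i : Fin 10 => ¬ s ≤ i.val)).card : ℚ) = s := by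
      have : (Finset.univ.filter (fun i : Fin 10 => ¬ s ≤ i.val)).card = s := by
        interval_cases s <;> decide
      rw [this]
    rw [h1, hc, hT, add_comm]
  have hsum2 : ∑ i, f i ^ 2 = s + ∑ i ∈ T, f i ^ 2 := by
    rw [← Finset.sum_filter_add_sum_filter_not Finset.univ (fun i : Fin 10 => s ≤ i.val)
      (fun i => f i ^ 2)]
    have h1 : ∑ i ∈ Finset.univ.filter (fun i : Fin 10 => ¬ s ≤ i.val), f i ^ 2
        = (Finset.univ.filter (fun i : Fin 10 => ¬ s ≤ i.val)).card := by
      have e : ∑ i ∈ Finset.univ.filter (fun i : Fin 10 => ¬ s ≤ i.val), f i ^ 2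
          = ∑ _i ∈ Finset.univ.filter (fun i : Fin 10 => ¬ s ≤ i.val), (1 : ℚ) :=
        Finset.sum_congr rfl (fun i hi => by
          simp only [Finset.mem_filter, not_le] at hi
          simp [hf, hone i hi.2])
      rw [e]; simp
    have hc : ((Finset.univ.filter (fun i : Fin 10 => ¬ s ≤ i.val)).card : ℚ) = s := by
      have : (Finset.univ.filter (fun i : Fin 10 => ¬ s ≤ i.val)).card = s := by
        interval_cases s <;> decide
      rw [this]
    rw [h1, hc, hT, add_comm]
  have key := pair_sum T f
  rw [hpairset]
  -- expand second sum
  have hs1 : (s : ℚ) - 1 ≠ 0 := by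
    have : (2 : ℚ) ≤ (s : ℚ) := by exact_mod_cast hs
    linarith
  have hsecond : ∑ i ∈ T, (f i - (s : ℚ) / ((s : ℚ) - 1)) ^ 2
      = ∑ i ∈ T, f i ^ 2 - 2 * ((s : ℚ) / ((s : ℚ) - 1)) * ∑ i ∈ T, f i
        + T.card * ((s : ℚ) / ((s : ℚ) - 1)) ^ 2 := by
    have e : ∑ i ∈ T, (f i - (s : ℚ) / ((s : ℚ) - 1)) ^ 2
        = ∑ i ∈ T, (f i ^ 2 - 2 * ((s : ℚ) / ((s : ℚ) - 1)) * f i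
            + ((s : ℚ) / ((s : ℚ) - 1)) ^ 2) :=
      Finset.sum_congr rfl (fun i _ => by ring)
    rw [e, Finset.sum_add_distrib, Finset.sum_sub_distrib, ← Finset.mul_sum,
      Finset.sum_const, nsmul_eq_mul]
  show (∑ i, f i ^ 2) - (1 / 9) * (∑ i, f i) ^ 2 = _
  rw [hsum1, hsum2, key, hsecond, hcard]
  have hcast : ((s : ℚ)) ≠ 0 := by positivity
  field_simp
  ring
end

section
/- There are infinitely many vectors n ∈ Z^{10} with Σ n_i ≡ 0 mod 3, q(n) ≤ 0, all entries positive, and singleton count exactly 1 (i.e., exactly one entry equal to 1). -/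
theorem sum10_aux {β : Type*} [AddCommMonoid β] (f : Fin 10 → β) :
    ∑ i, f i = f 0 + f 1 + f 2 + f 3 + f 4 + f 5 + f 6 + f 7 + f 8 + f 9 := by
  rw [Fin.sum_univ_castSucc, Fin.sum_univ_castSucc, Fin.sum_univ_eight]
  rfl

/-- There are infinitely many vectors `n ∈ ℤ¹⁰` with `Σ nᵢ ≡ 0 mod 3`,
`q(n) ≤ 0`, all entries positive, and exactly one entry equal to `1`. -/
theorem infinitely_many_imaginary_roots_singleton_one :
    {n : Fin 10 → ℤ |
      (3 : ℤ) ∣ (∑ i, n i) ∧ qE10 n ≤ 0 ∧ (∀ i, 0 < n i) ∧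
      (Finset.univ.filter (fun i => n i = 1)).card = 1}.Infinite := by
  apply Set.infinite_of_injective_forall_mem
    (f := fun m : ℕ => (![1, (m:ℤ)+2, (m:ℤ)+2, (m:ℤ)+2, (m:ℤ)+2, (m:ℤ)+2,
      (m:ℤ)+2, (m:ℤ)+2, (m:ℤ)+2, (m:ℤ)+4] : Fin 10 → ℤ))
  case hi =>
    intro a b hab
    have h := congrFun hab (1 : Fin 10)
    have h' : (a:ℤ) + 2 = (b:ℤ) + 2 := h
    omega
  case hf =>
    intro m
    refine ⟨⟨3 * m + 7, ?_⟩, ?_, ?_, ?_⟩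
    · rw [sum10_aux]
      show (1:ℤ) + ((m:ℤ)+2) + ((m:ℤ)+2) + ((m:ℤ)+2) + ((m:ℤ)+2) + ((m:ℤ)+2)
        + ((m:ℤ)+2) + ((m:ℤ)+2) + ((m:ℤ)+2) + ((m:ℤ)+4) = 3*(3*(m:ℤ)+7)
      ring
    · rw [qE10, sum10_aux, sum10_aux]
      show ((1:ℤ):ℚ)^2 + (((m:ℤ)+2 : ℤ):ℚ)^2 + (((m:ℤ)+2 : ℤ):ℚ)^2 + (((m:ℤ)+2 : ℤ):ℚ)^2
          + (((m:ℤ)+2 : ℤ):ℚ)^2 + (((m:ℤ)+2 : ℤ):ℚ)^2 + (((m:ℤ)+2 : ℤ):ℚ)^2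
          + (((m:ℤ)+2 : ℤ):ℚ)^2 + (((m:ℤ)+2 : ℤ):ℚ)^2 + (((m:ℤ)+4 : ℤ):ℚ)^2
          - 1/9 * (((1:ℤ):ℚ) + (((m:ℤ)+2 : ℤ):ℚ) + (((m:ℤ)+2 : ℤ):ℚ) + (((m:ℤ)+2 : ℤ):ℚ)
          + (((m:ℤ)+2 : ℤ):ℚ) + (((m:ℤ)+2 : ℤ):ℚ) + (((m:ℤ)+2 : ℤ):ℚ) + (((m:ℤ)+2 : ℤ):ℚ)
          + (((m:ℤ)+2 : ℤ):ℚ) + (((m:ℤ)+4 : ℤ):ℚ))^2 ≤ 0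
      push_cast
      have hm : (0:ℚ) ≤ (m:ℚ) := Nat.cast_nonneg m
      nlinarith [hm]
    · intro i
      fin_cases i
      · show (0:ℤ) < 1; norm_num
      · show (0:ℤ) < (m:ℤ)+2; omega
      · show (0:ℤ) < (m:ℤ)+2; omega
      · show (0:ℤ) < (m:ℤ)+2; omega
      · show (0:ℤ) < (m:ℤ)+2; omega
      · show (0:ℤ) < (m:ℤ)+2; omega
      · show (0:ℤ) < (m:ℤ)+2; omega
      · show (0:ℤ) < (m:ℤ)+2; omega
      · show (0:ℤ) < (m:ℤ)+2; omega
      · show (0:ℤ) < (m:ℤ)+4; omega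
    · rw [Finset.card_eq_one]
      refine ⟨0, ?_⟩
      ext i
      simp only [Finset.mem_filter, Finset.mem_univ, true_and, Finset.mem_singleton]
      fin_cases i
      · simp
      all_goals
        constructor
        · intro h
          exfalso
          first
            | (have h' : (m:ℤ)+2 = 1 := h; omega)
            | (have h' : (m:ℤ)+4 = 1 := h; omega)
        · intro h; exact absurd h (by decide)
end

section
/- The ten simple roots α_{-1},...,α_8 of E10 in the physical basis span (over Z) exactly the lattice {n ∈ Z^{10} : Σ_{i=1}^{10} n_i ≡ 0 mod 3}. -/
/-- The standard basis vector `e_j` of `ℤ¹⁰` (0-indexed). -/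
def stdVec (j : Fin 10) : Fin 10 → ℤ := fun i => if i = j then 1 else 0

/-- The simple roots `α₋₁, α₀, …, α₈` of `E₁₀` in the physical basis, indexed
by `Fin 10`. -/
def simpleRootE10 (k : Fin 10) : Fin 10 → ℤ :=
  if h : k.val ≤ 8 then
    stdVec ⟨k.val, by omega⟩ - stdVec ⟨k.val + 1, by omega⟩
  else stdVec 7 + stdVec 8 + stdVec 9

/-- Explicit expansion of a sum over `Fin 10`. -/
theorem sum_univ_ten' {M : Type*} [AddCommMonoid M] (f : Fin 10 → M) :
    ∑ i, f i = f 0 + f 1 + f 2 + f 3 + f 4 + f 5 + f 6 + f 7 + f 8 + f 9 := by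
  simp [Fin.sum_univ_succ,
    show (Fin.succ 2 : Fin 10) = 3 from rfl,
    show ((Fin.succ 2).succ : Fin 10) = 4 from rfl,
    show ((Fin.succ 2).succ.succ : Fin 10) = 5 from rfl,
    show ((Fin.succ 2).succ.succ.succ : Fin 10) = 6 from rfl,
    show ((Fin.succ 2).succ.succ.succ.succ : Fin 10) = 7 from rfl,
    show ((Fin.succ 2).succ.succ.succ.succ.succ : Fin 10) = 8 from rfl,
    show ((Fin.succ 2).succ.succ.succ.succ.succ.succ : Fin 10) = 9 from rfl,
    add_assoc]

/-- The ten simple roots of `E₁₀` span over `ℤ` exactly the lattice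
`{n ∈ ℤ¹⁰ : 3 ∣ Σ nᵢ}`. -/
theorem span_simpleRootsE10 (n : Fin 10 → ℤ) :
    n ∈ Submodule.span ℤ (Set.range simpleRootE10) ↔ (3 : ℤ) ∣ ∑ i, n i := by
  constructor
  · intro hn
    induction hn using Submodule.span_induction with
    | mem x hx =>
      obtain ⟨k, rfl⟩ := hx
      fin_cases k <;> simp [sum_univ_ten', simpleRootE10, stdVec]
    | zero => simp
    | add x y _ _ hx hy => simpa [Finset.sum_add_distrib] using dvd_add hx hy
    | smul a x _ hx => simpa [Finset.mul_sum] using Dvd.dvd.mul_left hx a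
  · rintro ⟨m, hm⟩
    rw [sum_univ_ten'] at hm
    have key : n = (n 0) • simpleRootE10 0 + (n 0 + n 1) • simpleRootE10 1
        + (n 0 + n 1 + n 2) • simpleRootE10 2 + (n 0 + n 1 + n 2 + n 3) • simpleRootE10 3
        + (n 0 + n 1 + n 2 + n 3 + n 4) • simpleRootE10 4
        + (n 0 + n 1 + n 2 + n 3 + n 4 + n 5) • simpleRootE10 5
        + (n 0 + n 1 + n 2 + n 3 + n 4 + n 5 + n 6) • simpleRootE10 6
        + (n 0 + n 1 + n 2 + n 3 + n 4 + n 5 + n 6 + n 7 - m) • simpleRootE10 7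
        + (n 0 + n 1 + n 2 + n 3 + n 4 + n 5 + n 6 + n 7 + n 8 - 2 * m) • simpleRootE10 8
        + m • simpleRootE10 9 := by
      funext i
      fin_cases i <;>
        simp (config := { decide := true }) [simpleRootE10, stdVec, Fin.ext_iff] <;> omega
    rw [key]
    have hs : ∀ k : Fin 10, simpleRootE10 k ∈ Submodule.span ℤ (Set.range simpleRootE10) :=
      fun k => Submodule.subset_span ⟨k, rfl⟩
    exact Submodule.add_mem _ (Submodule.add_mem _ (Submodule.add_mem _ (Submodule.add_mem _
      (Submodule.add_mem _ (Submodule.add_mem _ (Submodule.add_mem _ (Submodule.add_mem _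
      (Submodule.add_mem _ (Submodule.smul_mem _ _ (hs 0)) (Submodule.smul_mem _ _ (hs 1)))
      (Submodule.smul_mem _ _ (hs 2))) (Submodule.smul_mem _ _ (hs 3)))
      (Submodule.smul_mem _ _ (hs 4))) (Submodule.smul_mem _ _ (hs 5)))
      (Submodule.smul_mem _ _ (hs 6))) (Submodule.smul_mem _ _ (hs 7)))
      (Submodule.smul_mem _ _ (hs 8))) (Submodule.smul_mem _ _ (hs 9))
end
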